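/- Let (R, m) be a Noetherian local ring which is not Artinian. Then the maximal ideal m is open: the length of m as an R-module equals the length of R, i.e. len_R(m) = len_R(R). -/

import Mathlib

open Ordinal

universe u

/-- The ordinal length of a Noetherian module: the foundation rank of the zero submodule
in the lattice of submodules ordered by reverse inclusion. -/
noncomputable def moduleLength (R M : Type u) [Ring R] [AddCommGroup M]
    [Module R M] [IsNoetherian R M] : Ordinal.{u} :=
  IsWellFounded.rank (α := Submodule R M) (· > ·) ⊥

/-- Rank with respect to `>` does not decrease along a strictly monotone map. -/
theorem rank_le_of_strictMono {α β : Type u} [Preorder α] [Preorder β]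
    [WellFoundedGT α] [WellFoundedGT β] {f : α → β} (hf : StrictMono f) (a : α) :
    IsWellFounded.rank (α := α) (· > ·) a ≤ IsWellFounded.rank (α := β) (· > ·) (f a) := by
  induction a using IsWellFounded.induction (r := (· > · : α → α → Prop)) with
  | ind a IH =>
    rw [IsWellFounded.rank_eq]
    refine Ordinal.iSup_le fun ⟨b, hb⟩ => ?_
    have h1 : IsWellFounded.rank (α := β) (· > ·) (f b)
        < IsWellFounded.rank (α := β) (· > ·) (f a) :=
      IsWellFounded.rank_lt_of_rel (hf hb)
    exact Order.succ_le_of_lt (lt_of_le_of_lt (IH b hb) h1)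

theorem maximalIdeal_open_aux (R : Type u) [CommRing R] [IsNoetherianRing R] [IsLocalRing R]
    (I : Ideal R) :
    ∀ (hI : I ≤ IsLocalRing.maximalIdeal R),
    IsWellFounded.rank (α := Ideal R) (· > ·) I ≤
      1 + IsWellFounded.rank (α := Submodule R ↥(IsLocalRing.maximalIdeal R)) (· > ·)
        ((Submodule.MapSubtype.orderIso (IsLocalRing.maximalIdeal R)).symm ⟨I, hI⟩) := by
  set m := IsLocalRing.maximalIdeal R with hm
  set e := (Submodule.MapSubtype.orderIso m).symm with he
  induction I using IsWellFounded.induction (r := (· > · : Ideal R → Ideal R → Prop)) with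
  | ind I IH =>
    intro hI
    rw [IsWellFounded.rank_eq]
    refine Ordinal.iSup_le fun ⟨J, hJ⟩ => ?_
    rcases eq_or_ne J ⊤ with rfl | hJtop
    · have htop : IsWellFounded.rank (α := Ideal R) (· > ·) (⊤ : Ideal R) = 0 := by
        rw [IsWellFounded.rank_eq]
        have : IsEmpty {b : Ideal R // b > ⊤} := ⟨fun ⟨b, hb⟩ => absurd le_top hb.not_ge⟩
        simp
      rw [htop]
      simp [le_self_add (a := (1 : Ordinal))]
    · have hJm : J ≤ m := IsLocalRing.le_maximalIdeal hJtop
      have hlt : e ⟨J, hJm⟩ > e ⟨I, hI⟩ := e.lt_iff_lt.mpr (Subtype.mk_lt_mk.mpr hJ)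
      have h1 : IsWellFounded.rank (α := Submodule R ↥m) (· > ·) (e ⟨J, hJm⟩)
          < IsWellFounded.rank (α := Submodule R ↥m) (· > ·) (e ⟨I, hI⟩) :=
        IsWellFounded.rank_lt_of_rel hlt
      calc Order.succ (IsWellFounded.rank (α := Ideal R) (· > ·) J)
          ≤ Order.succ (1 + IsWellFounded.rank (α := Submodule R ↥m) (· > ·) (e ⟨J, hJm⟩)) :=
            Order.succ_le_succ (IH J hJ hJm)
        _ = 1 + Order.succ (IsWellFounded.rank (α := Submodule R ↥m) (· > ·) (e ⟨J, hJm⟩)) := by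
            rw [Order.succ_eq_add_one, Order.succ_eq_add_one, add_assoc]
        _ ≤ 1 + IsWellFounded.rank (α := Submodule R ↥m) (· > ·) (e ⟨I, hI⟩) :=
            add_le_add_right (Order.succ_le_of_lt h1) 1

/-- In a non-Artinian Noetherian local ring, the maximal ideal is open:
`len m = len R`. -/
theorem maximalIdeal_open (R : Type u) [CommRing R] [IsNoetherianRing R] [IsLocalRing R]
    (hart : ¬ IsArtinianRing R) :
    moduleLength R ↥(IsLocalRing.maximalIdeal R) = moduleLength R R := by
  set m := IsLocalRing.maximalIdeal R with hm
  set e := (Submodule.MapSubtype.orderIso m).symm with he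
  -- a strictly descending chain of ideals, all contained in `m`
  have hwf : ¬ WellFounded (· < · : Ideal R → Ideal R → Prop) := fun h => hart ⟨h⟩
  rw [RelEmbedding.wellFounded_iff_isEmpty, not_isEmpty_iff] at hwf
  obtain ⟨f⟩ := hwf
  have hf : ∀ n : ℕ, f (n + 1) < f n := fun n => f.map_rel_iff.mpr (Nat.lt_succ_self n)
  have hfm : ∀ n : ℕ, f (n + 1) ≤ m := fun n =>
    IsLocalRing.le_maximalIdeal (fun h => not_top_lt (h ▸ hf n))
  set g : ℕ → Submodule R ↥m := fun n => e ⟨f (n + 1), hfm n⟩ with hg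
  have hganti : ∀ n, g (n + 1) < g n := fun n =>
    e.lt_iff_lt.mpr (Subtype.mk_lt_mk.mpr (hf (n + 1)))
  have hrank : ∀ n : ℕ, (n : Ordinal) ≤ IsWellFounded.rank (α := Submodule R ↥m) (· > ·) (g n) := by
    intro n
    induction n with
    | zero => simp
    | succ n ih =>
      have : IsWellFounded.rank (α := Submodule R ↥m) (· > ·) (g n)
          < IsWellFounded.rank (α := Submodule R ↥m) (· > ·) (g (n + 1)) :=
        IsWellFounded.rank_lt_of_rel (hganti n)
      push_cast
      exact Order.add_one_le_of_lt (lt_of_le_of_lt ih this)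
  have hgbot : ∀ n, g n ≠ ⊥ := fun n h => (h ▸ hganti n).not_ge bot_le
  have homega : (Ordinal.omega0 : Ordinal.{u}) ≤ moduleLength R ↥m := by
    rw [Ordinal.omega0_le]
    intro n
    refine le_trans (hrank n) ?_
    exact le_of_lt (IsWellFounded.rank_lt_of_rel (bot_lt_iff_ne_bot.mpr (hgbot n)))
  -- `e ⟨⊥, _⟩ = ⊥`
  have hebot : e ⟨(⊥ : Ideal R), bot_le⟩ = (⊥ : Submodule R ↥m) := by
    rw [he, OrderIso.symm_apply_eq]
    exact Subtype.ext (Submodule.map_bot m.subtype).symm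
  have h1 : moduleLength R R ≤ moduleLength R ↥m := by
    have := maximalIdeal_open_aux R (⊥ : Ideal R) bot_le
    rw [← he, hebot] at this
    calc moduleLength R R ≤ 1 + moduleLength R ↥m := this
      _ = moduleLength R ↥m := Ordinal.one_add_of_omega0_le homega
  have h2 : moduleLength R ↥m ≤ moduleLength R R := by
    have hsm : StrictMono (Submodule.MapSubtype.orderEmbedding m) :=
      (Submodule.MapSubtype.orderEmbedding m).strictMono
    have := rank_le_of_strictMono hsm (⊥ : Submodule R ↥m)
    have hb : (Submodule.MapSubtype.orderEmbedding m) ⊥ = (⊥ : Ideal R) := by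
      rw [Submodule.map_subtype_embedding_eq, Submodule.map_bot]
    rw [hb] at this
    exact this
  exact le_antisymm h2 h1
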